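/- arXiv:2009.11205 — 3 statements merged into one kernel-verified Lean document; each statement's English description precedes it below -/
import Mathlib

section
/- Negative feedback interconnection of a strictly passive static map with stable first-order lags is stable: if X ∈ ℝ^{n×n} is symmetric positive definite and T, K are diagonal matrices with T_kk > 0 and K_kk ≥ 0 for all k, then the matrix A = -T^{-1}(I + K X) is Hurwitz, i.e., every eigenvalue of A has strictly negative real part. -/
open Matrix Finset Complex

private lemma re_pos_aux {n : ℕ} (X : Matrix (Fin n) (Fin n) ℝ) (hXpd : X.PosDef)
    (v : Fin n → ℂ) (hv : v ≠ 0) :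
    0 < (∑ k, (starRingEnd ℂ) (v k) * ((X.map Complex.ofReal) *ᵥ v) k).re := by
  set a : Fin n → ℝ := fun k => (v k).re with ha
  set b : Fin n → ℝ := fun k => (v k).im with hb
  have hterm : ∀ k j : Fin n, ((starRingEnd ℂ) (v k) * ((X k j : ℂ) * v j)).re
      = a k * (X k j * a j) + b k * (X k j * b j) := by
    intro k j
    simp [Complex.mul_re, Complex.mul_im, ha, hb]
    try ring
  have hre : (∑ k, (starRingEnd ℂ) (v k) * ((X.map Complex.ofReal) *ᵥ v) k).re
      = a ⬝ᵥ X *ᵥ a + b ⬝ᵥ X *ᵥ b := by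
    simp only [Matrix.mulVec, dotProduct, Matrix.map_apply, Finset.mul_sum,
      Complex.re_sum]
    rw [← Finset.sum_add_distrib]
    refine Finset.sum_congr rfl fun k _ => ?_
    rw [← Finset.sum_add_distrib]
    exact Finset.sum_congr rfl fun j _ => hterm k j
  have hab : a ≠ 0 ∨ b ≠ 0 := by
    by_contra hc
    push_neg at hc
    apply hv
    funext k
    have h1 := congrFun hc.1 k
    have h2 := congrFun hc.2 k
    exact Complex.ext (by simpa [ha] using h1) (by simpa [hb] using h2)
  rw [hre]
  rcases hab with h | h
  · have h1 := hXpd.dotProduct_mulVec_pos h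
    have h2 := hXpd.posSemidef.dotProduct_mulVec_nonneg b
    simp only [star_trivial] at h1 h2
    linarith
  · have h1 := hXpd.dotProduct_mulVec_pos h
    have h2 := hXpd.posSemidef.dotProduct_mulVec_nonneg a
    simp only [star_trivial] at h1 h2
    linarith



/-- if `X` is symmetric positive definite, `T = diag t` with
`t k > 0` and `K = diag κ` with `κ k ≥ 0`, then `A = -T⁻¹ (I + K X)` is
Hurwitz: every (complex) eigenvalue of `A` has strictly negative real part. -/
theorem stmt_3 {n : ℕ}
    (t κ : Fin n → ℝ) (ht : ∀ k, 0 < t k) (hκ : ∀ k, 0 ≤ κ k)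
    (X : Matrix (Fin n) (Fin n) ℝ) (hXsymm : X.IsSymm) (hXpd : X.PosDef) :
    ∀ μ ∈ spectrum ℂ
      (((-(Matrix.diagonal t)⁻¹ *
          ((1 : Matrix (Fin n) (Fin n) ℝ) + Matrix.diagonal κ * X))).map
            Complex.ofReal),
      μ.re < 0 := by
  intro μ hμ
  by_contra hre0
  push_neg at hre0
  set M : Matrix (Fin n) (Fin n) ℝ :=
    -(Matrix.diagonal t)⁻¹ * ((1 : Matrix (Fin n) (Fin n) ℝ) + Matrix.diagonal κ * X) with hM
  set Ac : Matrix (Fin n) (Fin n) ℂ := M.map Complex.ofReal with hAc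
  rw [spectrum.mem_iff] at hμ
  have hdet : (algebraMap ℂ (Matrix (Fin n) (Fin n) ℂ) μ - Ac).det = 0 := by
    by_contra hd
    exact hμ ((Matrix.isUnit_iff_isUnit_det _).2 (Ne.isUnit hd))
  obtain ⟨v, hv, hveq⟩ := (Matrix.exists_mulVec_eq_zero_iff).2 hdet
  have heig : Ac *ᵥ v = μ • v := by
    have h1 : (algebraMap ℂ (Matrix (Fin n) (Fin n) ℂ) μ) *ᵥ v - Ac *ᵥ v = 0 := by
      rw [← Matrix.sub_mulVec]; exact hveq
    have h2 : (algebraMap ℂ (Matrix (Fin n) (Fin n) ℂ) μ) *ᵥ v = μ • v := by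
      rw [Algebra.algebraMap_eq_smul_one, Matrix.smul_mulVec, Matrix.one_mulVec]
    rw [h2, sub_eq_zero] at h1
    exact h1.symm
  -- real matrix identity: diagonal t * M = -(1 + diagonal κ * X)
  have hdet_t : IsUnit (Matrix.diagonal t).det := by
    rw [Matrix.det_diagonal]
    exact (Finset.prod_pos fun k _ => ht k).ne'.isUnit
  have hreal : (Matrix.diagonal t) * M
      = -((1 : Matrix (Fin n) (Fin n) ℝ) + Matrix.diagonal κ * X) := by
    rw [hM, Matrix.neg_mul, Matrix.mul_neg, ← Matrix.mul_assoc,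
      Matrix.mul_nonsing_inv _ hdet_t, Matrix.one_mul]
  have hDA_entry : ∀ k l, (t k : ℂ) * Ac k l
      = -((if k = l then (1:ℂ) else 0) + (κ k : ℂ) * (X k l : ℂ)) := by
    intro k l
    have h1 := congrFun (congrFun hreal k) l
    rw [Matrix.diagonal_mul] at h1
    have h2 : (-(((1 : Matrix (Fin n) (Fin n) ℝ) + Matrix.diagonal κ * X))) k l
        = -((if k = l then (1:ℝ) else 0) + κ k * X k l) := by
      simp [Matrix.one_apply, Matrix.diagonal_mul, Matrix.add_apply, Matrix.neg_apply]
    rw [h2] at h1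
    have : Ac k l = ((M k l : ℝ) : ℂ) := by rw [hAc, Matrix.map_apply]
    rw [this, ← Complex.ofReal_mul, h1]
    push_cast [apply_ite Complex.ofReal]
    ring
  set w : Fin n → ℂ := (X.map Complex.ofReal) *ᵥ v with hw
  have key : ∀ k, v k + (κ k : ℂ) * w k + μ * ((t k : ℂ) * v k) = 0 := by
    intro k
    have h1 : (t k : ℂ) * ((Ac *ᵥ v) k) = (t k : ℂ) * (μ * v k) := by
      rw [heig]; simp
    have h2 : (t k : ℂ) * ((Ac *ᵥ v) k) = ∑ j, ((t k : ℂ) * Ac k j) * v j := by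
      simp [Matrix.mulVec, dotProduct, Finset.mul_sum, mul_assoc]
    have h3 : ∑ j, ((t k : ℂ) * Ac k j) * v j
        = -(v k + (κ k : ℂ) * w k) := by
      have e : ∀ j, ((t k : ℂ) * Ac k j) * v j
          = -((if k = j then v j else 0) + (κ k : ℂ) * ((X k j : ℂ) * v j)) := by
        intro j
        rw [hDA_entry k j]
        by_cases hkj : k = j <;> simp [hkj] <;> ring
      rw [Finset.sum_congr rfl fun j _ => e j]
      rw [Finset.sum_neg_distrib, Finset.sum_add_distrib]
      simp [hw, Matrix.mulVec, dotProduct, Finset.mul_sum, Matrix.map_apply]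
    rw [h2, h3] at h1
    linear_combination -h1
  have hz : ∀ k, κ k = 0 → v k = 0 := by
    intro k hk
    have h1 := key k
    rw [hk] at h1
    push_cast at h1
    have h2 : (1 + μ * (t k : ℂ)) * v k = 0 := by linear_combination h1
    have h3 : (1 + μ * (t k : ℂ)) ≠ 0 := by
      intro hcon
      have h4 : (1 + μ * (t k : ℂ)).re = 0 := by rw [hcon]; simp
      simp [Complex.add_re, Complex.mul_re] at h4
      nlinarith [ht k, mul_nonneg hre0 (ht k).le]
    rcases mul_eq_zero.1 h2 with h | h
    · exact absurd h h3
    · exact h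
  -- weighted sum
  have perk : ∀ k, ((κ k)⁻¹ : ℝ) * ((starRingEnd ℂ) (v k) * v k)
      + (starRingEnd ℂ) (v k) * w k
      + μ * (((κ k)⁻¹ : ℝ) * ((t k : ℂ) * ((starRingEnd ℂ) (v k) * v k))) = 0 := by
    intro k
    by_cases hk : κ k = 0
    · simp [hz k hk, hk]
    · have h1 := key k
      have hκc : ((κ k : ℝ) : ℂ) ≠ 0 := Complex.ofReal_ne_zero.2 hk
      have hinv : ((κ k : ℝ) : ℂ)⁻¹ * ((κ k : ℝ) : ℂ) = 1 := inv_mul_cancel₀ hκc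
      push_cast
      linear_combination ((starRingEnd ℂ) (v k)) * ((κ k : ℝ) : ℂ)⁻¹ * h1
        - ((starRingEnd ℂ) (v k)) * w k * hinv
  set r1 : ℝ := ∑ k, (κ k)⁻¹ * Complex.normSq (v k) with hr1
  set r3 : ℝ := ∑ k, (κ k)⁻¹ * (t k * Complex.normSq (v k)) with hr3
  set P : ℂ := ∑ k, (starRingEnd ℂ) (v k) * w k with hP
  have hsum : (r1 : ℂ) + P + μ * (r3 : ℂ) = 0 := by
    have e1 : (r1 : ℂ) = ∑ k, ((κ k)⁻¹ : ℝ) * ((starRingEnd ℂ) (v k) * v k) := by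
      rw [hr1]
      push_cast [← Complex.normSq_eq_conj_mul_self]
      ring_nf
    have e3 : μ * (r3 : ℂ)
        = ∑ k, μ * (((κ k)⁻¹ : ℝ) * ((t k : ℂ) * ((starRingEnd ℂ) (v k) * v k))) := by
      rw [hr3]
      push_cast [← Complex.normSq_eq_conj_mul_self]
      rw [Finset.mul_sum]
    rw [e1, e3, hP, ← Finset.sum_add_distrib, ← Finset.sum_add_distrib]
    rw [Finset.sum_congr rfl fun k _ => perk k]
    simp
  have hPre : 0 < P.re := re_pos_aux X hXpd v hv
  have hre := congrArg Complex.re hsum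
  simp only [Complex.add_re, Complex.ofReal_re, Complex.mul_re, Complex.ofReal_im,
    Complex.zero_re, mul_zero, sub_zero] at hre
  have h4 : 0 ≤ r1 := Finset.sum_nonneg fun k _ =>
    mul_nonneg (inv_nonneg.2 (hκ k)) (Complex.normSq_nonneg _)
  have h5 : 0 ≤ r3 := Finset.sum_nonneg fun k _ =>
    mul_nonneg (inv_nonneg.2 (hκ k)) (mul_nonneg (ht k).le (Complex.normSq_nonneg _))
  nlinarith [mul_nonneg hre0 h5]
end

section
/- Rank condition for perfect decoupling: let G_a ∈ F^{p×m} and G_v ∈ F^{p×q} be matrices over a field F. There exists a matrix S ∈ F^{r×p} (for some r) such that S G_v = 0 and S G_a has rank m (i.e., S G_a is left invertible) if and only if rank [G_a G_v] = m + rank G_v. -/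
open Matrix LinearMap Module

private lemma range_fromColumns {F : Type*} [Field F] {p m q : ℕ}
    (Ga : Matrix (Fin p) (Fin m) F) (Gv : Matrix (Fin p) (Fin q) F) :
    LinearMap.range (Matrix.fromCols Ga Gv).mulVecLin
      = LinearMap.range Ga.mulVecLin ⊔ LinearMap.range Gv.mulVecLin := by
  apply le_antisymm
  · rintro _ ⟨x, rfl⟩
    have : (Matrix.fromCols Ga Gv).mulVecLin x
        = Ga.mulVec (x ∘ Sum.inl) + Gv.mulVec (x ∘ Sum.inr) := by
      have hx : x = Sum.elim (x ∘ Sum.inl) (x ∘ Sum.inr) := by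
        funext i; cases i <;> rfl
      rw [Matrix.mulVecLin_apply]
      conv_lhs => rw [hx]
      exact Matrix.fromCols_mulVec_sumElim Ga Gv _ _
    rw [this]
    exact Submodule.add_mem_sup ⟨_, rfl⟩ ⟨_, rfl⟩
  · rw [sup_le_iff]
    constructor
    · rintro _ ⟨x, rfl⟩
      refine ⟨Sum.elim x 0, ?_⟩
      simp [Matrix.fromCols_mulVec_sumElim]
    · rintro _ ⟨x, rfl⟩
      refine ⟨Sum.elim 0 x, ?_⟩
      simp [Matrix.fromCols_mulVec_sumElim]

/-- rank condition for perfect decoupling: over a field `F`,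
there exist `r` and `S : F^{r×p}` with `S Gv = 0` and `S Ga` of full column
rank `m` (left invertible) iff `rank [Ga Gv] = m + rank Gv`. -/
theorem stmt_7 {F : Type*} [Field F] {p m q : ℕ}
    (Ga : Matrix (Fin p) (Fin m) F) (Gv : Matrix (Fin p) (Fin q) F) :
    (∃ (r : ℕ) (S : Matrix (Fin r) (Fin p) F),
      S * Gv = 0 ∧ (S * Ga).rank = m) ↔
    (Matrix.fromCols Ga Gv).rank = m + Gv.rank := by
  set A : Submodule F (Fin p → F) := LinearMap.range Ga.mulVecLin with hA
  set V : Submodule F (Fin p → F) := LinearMap.range Gv.mulVecLin with hV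
  have hsup : (Matrix.fromCols Ga Gv).rank = finrank F ↥(A ⊔ V) := by
    rw [Matrix.rank, range_fromColumns]
  have hdim : finrank F ↥(A ⊔ V) + finrank F ↥(A ⊓ V) = finrank F ↥A + finrank F ↥V :=
    Submodule.finrank_sup_add_finrank_inf_eq A V
  constructor
  · rintro ⟨r, S, hSGv, hSGa⟩
    -- (S*Ga).mulVecLin is injective
    have hcomp : (S * Ga).mulVecLin = S.mulVecLin ∘ₗ Ga.mulVecLin := Matrix.mulVecLin_mul S Ga
    have hker : LinearMap.ker (S * Ga).mulVecLin = ⊥ := by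
      have h1 := LinearMap.finrank_range_add_finrank_ker (S * Ga).mulVecLin
      rw [show finrank F (Fin m → F) = m by simp] at h1
      have hSGa' : finrank F ↥(LinearMap.range (S * Ga).mulVecLin) = m := hSGa
      have : finrank F ↥(LinearMap.ker (S * Ga).mulVecLin) = 0 := by omega
      exact Submodule.finrank_eq_zero.mp this
    have hinj : Function.Injective (S * Ga).mulVecLin := LinearMap.ker_eq_bot.mp hker
    have hGainj : Function.Injective Ga.mulVecLin := by
      intro x y hxy
      apply hinj
      rw [hcomp]
      simp [hxy]
    -- A ⊓ V = ⊥
    have hAV : A ⊓ V = ⊥ := by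
      rw [Submodule.eq_bot_iff]
      rintro v ⟨⟨x, rfl⟩, ⟨y, hy⟩⟩
      have hSv : S.mulVecLin (Ga.mulVecLin x) = 0 := by
        rw [← hy]
        have : S.mulVecLin (Gv.mulVecLin y) = (S * Gv).mulVecLin y := by
          rw [Matrix.mulVecLin_mul]; rfl
        rw [this, hSGv]; simp
      have : (S * Ga).mulVecLin x = 0 := by rw [hcomp]; exact hSv
      have hx : x = 0 := by
        apply hinj; simpa using this
      simp [hx]
    have hrankA : finrank F ↥A = m :=
      (LinearMap.finrank_range_of_inj hGainj).trans (by simp)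
    rw [hsup]
    rw [hAV, finrank_bot, add_zero, hrankA] at hdim
    rw [hdim]; rfl
  · intro h
    rw [hsup] at h
    have hrankAle : finrank F ↥A ≤ m := by
      have := Matrix.rank_le_card_width Ga
      simpa [Matrix.rank] using this
    have hrankVV : Gv.rank = finrank F ↥V := rfl
    rw [hrankVV] at h
    have hsuple : finrank F ↥(A ⊔ V) ≤ finrank F ↥A + finrank F ↥V := by omega
    have hrankA : finrank F ↥A = m := by omega
    have hinf0 : finrank F ↥(A ⊓ V) = 0 := by omega
    have hAV : A ⊓ V = ⊥ := Submodule.finrank_eq_zero.mp hinf0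
    -- Ga injective
    have hGaker : LinearMap.ker Ga.mulVecLin = ⊥ := by
      have h1 := LinearMap.finrank_range_add_finrank_ker Ga.mulVecLin
      rw [show finrank F (Fin m → F) = m by simp, hrankA] at h1
      exact Submodule.finrank_eq_zero.mp (by omega)
    -- build S from the quotient map
    set Q := (Fin p → F) ⧸ V with hQ
    set r := finrank F Q with hr
    let b : Basis (Fin r) F Q := Module.finBasis F Q
    let f : (Fin p → F) →ₗ[F] (Fin r → F) := (b.equivFun : Q ≃ₗ[F] (Fin r → F)).toLinearMap ∘ₗ V.mkQ
    refine ⟨r, LinearMap.toMatrix' f, ?_, ?_⟩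
    · apply Matrix.toLin'.injective
      rw [Matrix.toLin'_apply', Matrix.mulVecLin_mul]
      rw [show (LinearMap.toMatrix' f).mulVecLin = f from
        (Matrix.toLin'_apply' _).symm.trans (Matrix.toLin'_toMatrix' f)]
      rw [show Matrix.toLin' (0 : Matrix (Fin r) (Fin q) F) = 0 from map_zero _]
      apply LinearMap.range_le_ker_iff.mp
      intro v hv
      rw [LinearMap.mem_ker]
      have hmkQ : V.mkQ v = 0 := by
        rw [Submodule.mkQ_apply, Submodule.Quotient.mk_eq_zero]; exact hv
      simp [f, LinearMap.comp_apply, hmkQ]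
    · rw [Matrix.rank, Matrix.mulVecLin_mul,
        show (LinearMap.toMatrix' f).mulVecLin = f from
          (Matrix.toLin'_apply' _).symm.trans (Matrix.toLin'_toMatrix' f)]
      have hinj : Function.Injective (f ∘ₗ Ga.mulVecLin) := by
        rw [← LinearMap.ker_eq_bot, Submodule.eq_bot_iff]
        intro x hx
        have hfx : f (Ga.mulVecLin x) = 0 := hx
        have hmkQ : V.mkQ (Ga.mulVecLin x) = 0 := by
          have := (b.equivFun : Q ≃ₗ[F] (Fin r → F)).map_eq_zero_iff.mp hfx
          exact this
        have hmem : Ga.mulVecLin x ∈ V := (Submodule.Quotient.mk_eq_zero V).mp hmkQ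
        have : Ga.mulVecLin x ∈ A ⊓ V := ⟨⟨x, rfl⟩, hmem⟩
        rw [hAV] at this
        have hx0 : Ga.mulVecLin x = 0 := this
        have := hGaker ▸ (LinearMap.mem_ker.mpr hx0)
        simpa using this
      rw [LinearMap.finrank_range_of_inj hinj]
      simp
end

section
/- Exact unknown-input tracking: with H̃ as above satisfying (I - H̃C̃)Ũ = 0, F̃ = Ã - H̃C̃Ã, and K̃ = F̃H̃, the estimation error e(t) = z(t) - ẑ(t) of the observer ζ̇ = F̃ζ + K̃C̃z, ẑ = ζ + H̃C̃z, for the plant ż = Ãz + Ũv, satisfies the autonomous dynamics ė = F̃ e, independently of the unknown input v; hence if F̃ is Hurwitz, e(t) → 0 as t → ∞ for every input signal v and every initial condition. -/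
open Matrix NormedSpace Filter

attribute [local instance] Matrix.linftyOpNormedAddCommGroup Matrix.linftyOpNormedRing
  Matrix.linftyOpNormedAlgebra


-- scalar decay
lemma scalar_decay (μ : ℂ) (hμ : μ.re < 0) (j : ℕ) :
    Tendsto (fun t : ℝ => (t : ℂ) ^ j * Complex.exp ((t : ℂ) * μ)) atTop (nhds 0) := by
  have hb : (0:ℝ) < -μ.re := by linarith
  have base : Tendsto (fun x : ℝ => x ^ j * Real.exp (-x)) atTop (nhds 0) :=
    Real.tendsto_pow_mul_exp_neg_atTop_nhds_zero j
  have comp : Tendsto (fun t : ℝ => ((-μ.re) * t) ^ j * Real.exp (-((-μ.re) * t))) atTop (nhds 0) :=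
    base.comp (tendsto_id.const_mul_atTop hb)
  have h2 : Tendsto (fun t : ℝ => t ^ j * Real.exp (t * μ.re)) atTop (nhds 0) := by
    have := comp.const_mul ((-μ.re) ^ j)⁻¹
    rw [mul_zero] at this
    refine this.congr' ?_
    filter_upwards [eventually_ge_atTop 0] with t ht
    rw [mul_pow]
    field_simp
  refine squeeze_zero_norm' ?_ h2
  filter_upwards [eventually_ge_atTop 0] with t ht
  rw [norm_mul, norm_pow, Complex.norm_real, Real.norm_eq_abs, Complex.norm_exp,
    abs_of_nonneg ht]
  simp [Complex.mul_re]

lemma exp_mulVec_tendsto_zero {n : ℕ} (A : Matrix (Fin n) (Fin n) ℂ)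
    (hspec : ∀ μ ∈ spectrum ℂ A, μ.re < 0) (w : Fin n → ℂ) :
    Tendsto (fun t : ℝ => (exp ((t:ℂ) • A)).mulVec w) atTop (nhds 0) := by
  classical
  set f : Module.End ℂ (Fin n → ℂ) := Matrix.toLinAlgEquiv' A with hf
  have hw : w ∈ ⨆ μ, f.maxGenEigenspace μ := by
    rw [Module.End.iSup_maxGenEigenspace_eq_top]; trivial
  refine Submodule.iSup_induction (motive := fun w => Tendsto (fun t : ℝ =>
      (exp ((t:ℂ) • A)).mulVec w) atTop (nhds 0)) _ hw ?_ ?_ ?_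
  · -- generalized eigenvector case
    intro μ x hx
    by_cases hx0 : x = 0
    · simpa [hx0] using tendsto_const_nhds
    obtain ⟨k, hk⟩ := (Module.End.mem_maxGenEigenspace f μ x).mp hx
    have hμ : μ.re < 0 := by
      apply hspec
      rw [← AlgEquiv.spectrum_eq (Matrix.toLinAlgEquiv' (R := ℂ) (n := Fin n)) A, ← hf,
        ← Module.End.hasEigenvalue_iff_mem_spectrum]
      refine Module.End.hasEigenvalue_of_hasGenEigenvalue (k := k) ?_
      rw [Module.End.HasGenEigenvalue, Module.End.HasUnifEigenvalue, Submodule.ne_bot_iff]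
      exact ⟨x, Module.End.mem_genEigenspace.mpr ⟨k, le_refl _, LinearMap.mem_ker.mpr hk⟩, hx0⟩
    set N : Matrix (Fin n) (Fin n) ℂ := A - μ • 1 with hN
    have hNx : ∀ j, k ≤ j → (N ^ j).mulVec x = 0 := by
      intro j hj
      have hfN : f - μ • 1 = Matrix.toLinAlgEquiv' N := by
        rw [hf, hN, _root_.map_sub, _root_.map_smul, _root_.map_one]
      have hNk : (N ^ k).mulVec x = 0 := by
        rw [hfN] at hk
        have : (Matrix.toLinAlgEquiv' (N ^ k)) x = 0 := by rw [_root_.map_pow]; exact hk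
        rwa [Matrix.toLinAlgEquiv'_apply] at this
      have hsplit : N ^ j = N ^ (j - k) * N ^ k := by
        rw [← pow_add]; congr 1; omega
      rw [hsplit, ← Matrix.mulVec_mulVec, hNk, Matrix.mulVec_zero]
    -- the continuous linear map  M ↦ M.mulVec x
    let L : Matrix (Fin n) (Fin n) ℂ →ₗ[ℂ] (Fin n → ℂ) :=
      { toFun := fun M => M.mulVec x
        map_add' := fun M₁ M₂ => Matrix.add_mulVec M₁ M₂ x
        map_smul' := fun c M => Matrix.smul_mulVec c M x }
    let Lc : Matrix (Fin n) (Fin n) ℂ →L[ℂ] (Fin n → ℂ) :=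
      ⟨L, L.continuous_of_finiteDimensional⟩
    have key : ∀ t : ℝ, (exp ((t:ℂ) • A)).mulVec x
        = ∑ j ∈ Finset.range k,
            ((t:ℂ) ^ j * Complex.exp ((t:ℂ) * μ) * ((j.factorial : ℂ))⁻¹) •
              (N ^ j).mulVec x := by
      intro t
      have hsplit : (t:ℂ) • A = ((t:ℂ) * μ) • (1 : Matrix (Fin n) (Fin n) ℂ) + (t:ℂ) • N := by
        rw [hN, smul_sub, mul_smul]; abel
      have hcomm : Commute (((t:ℂ) * μ) • (1 : Matrix (Fin n) (Fin n) ℂ)) ((t:ℂ) • N) :=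
        (Commute.one_left N).smul_left ((t:ℂ) * μ) |>.smul_right (t:ℂ)
      have hexp1 : exp (((t:ℂ) * μ) • (1 : Matrix (Fin n) (Fin n) ℂ))
          = Complex.exp ((t:ℂ) * μ) • (1 : Matrix (Fin n) (Fin n) ℂ) := by
        rw [← Algebra.algebraMap_eq_smul_one]
        erw [← map_exp (algebraMap ℂ (Matrix (Fin n) (Fin n) ℂ)) (continuous_algebraMap _ _)]
        rw [Complex.exp_eq_exp_ℂ, Algebra.algebraMap_eq_smul_one]
      have hexpN : (exp ((t:ℂ) • N)).mulVec x
          = ∑ j ∈ Finset.range k, (((t:ℂ) ^ j) * ((j.factorial : ℂ))⁻¹) • (N ^ j).mulVec x := by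
        have hsum := expSeries_summable' (𝕂 := ℂ) ((t:ℂ) • N)
        calc (exp ((t:ℂ) • N)).mulVec x
            = Lc (∑' j : ℕ, ((j.factorial : ℂ))⁻¹ • ((t:ℂ) • N) ^ j) := by
              rw [exp_eq_tsum ℂ]; rfl
          _ = ∑' j : ℕ, Lc (((j.factorial : ℂ))⁻¹ • ((t:ℂ) • N) ^ j) := Lc.map_tsum hsum
          _ = ∑ j ∈ Finset.range k, (((t:ℂ) ^ j) * ((j.factorial : ℂ))⁻¹) • (N ^ j).mulVec x := by
              rw [tsum_eq_sum (s := Finset.range k) (f := fun j =>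
                Lc (((j.factorial : ℂ))⁻¹ • ((t:ℂ) • N) ^ j)) ?_]
              · refine Finset.sum_congr rfl fun j _ => ?_
                show (((j.factorial : ℂ))⁻¹ • ((t:ℂ) • N) ^ j).mulVec x = _
                rw [smul_pow, smul_smul, Matrix.smul_mulVec]
                ring_nf
              · intro j hj
                have hkj : k ≤ j := by
                  by_contra h
                  exact hj (Finset.mem_range.mpr (by omega))
                show (((j.factorial : ℂ))⁻¹ • ((t:ℂ) • N) ^ j).mulVec x = 0
                rw [smul_pow, smul_smul, Matrix.smul_mulVec, hNx j hkj, smul_zero]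
      rw [hsplit, Matrix.exp_add_of_commute _ _ hcomm, hexp1, smul_mul_assoc, one_mul,
        Matrix.smul_mulVec, hexpN, Finset.smul_sum]
      refine Finset.sum_congr rfl fun j _ => ?_
      rw [smul_smul]
      ring_nf
    refine Tendsto.congr (fun t => (key t).symm) ?_
    rw [show (0 : Fin n → ℂ) = ∑ _j ∈ Finset.range k, (0 : Fin n → ℂ) by simp]
    refine tendsto_finset_sum _ fun j _ => ?_
    have h0 : Tendsto (fun t : ℝ => (t:ℂ) ^ j * Complex.exp ((t:ℂ) * μ) * ((j.factorial : ℂ))⁻¹)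
        atTop (nhds 0) := by
      simpa using (scalar_decay μ hμ j).mul_const ((j.factorial : ℂ))⁻¹
    simpa using h0.smul_const ((N ^ j).mulVec x)
  · simpa [Matrix.mulVec_zero] using tendsto_const_nhds
  · intro x y hx hy
    simpa [Matrix.mulVec_add] using hx.add hy

lemma exp_map_ofReal {n : ℕ} (F : Matrix (Fin n) (Fin n) ℝ) (t : ℝ) :
    (exp (t • F)).map Complex.ofReal = exp ((t:ℂ) • F.map Complex.ofReal) := by
  classical
  have hφ : Continuous (Complex.ofRealAm.mapMatrix (m := Fin n)) :=
    (Complex.ofRealAm.mapMatrix (m := Fin n)).toLinearMap.continuous_of_finiteDimensional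
  have h1 := map_exp (Complex.ofRealAm.mapMatrix (m := Fin n)) hφ (t • F)
  rw [AlgHom.mapMatrix_apply, AlgHom.mapMatrix_apply] at h1
  have h2 : (t • F).map (Complex.ofRealAm : ℝ → ℂ) = (t:ℂ) • F.map Complex.ofReal := by
    ext i j
    simp [Complex.real_smul]
  have h3 : (exp (t • F)).map (Complex.ofRealAm : ℝ → ℂ)
      = (exp (t • F)).map Complex.ofReal := rfl
  erw [h3, h2] at h1
  exact h1

lemma mulVec_map_ofReal {n : ℕ} (M : Matrix (Fin n) (Fin n) ℝ) (c : Fin n → ℝ) (i : Fin n) :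
    ((M.map Complex.ofReal).mulVec (fun j => ((c j : ℝ) : ℂ))) i = ((M.mulVec c) i : ℂ) := by
  simp [Matrix.mulVec, dotProduct]

lemma part2_aux {n : ℕ} (Ft : Matrix (Fin n) (Fin n) ℝ) (e : ℝ → Fin n → ℝ)
    (hder : ∀ t, HasDerivAt e (Ft.mulVec (e t)) t)
    (hspec : ∀ μ ∈ spectrum ℂ (Ft.map Complex.ofReal), μ.re < 0) :
    Tendsto e atTop (nhds 0) := by
  classical
  set c : Fin n → ℝ := e 0 with hc
  set y : ℝ → Fin n → ℝ := fun t => (exp (t • Ft)).mulVec c with hy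
  have hyder : ∀ t, HasDerivAt y (Ft.mulVec (y t)) t := by
    intro t
    have hD := hasDerivAt_exp_smul_const' (𝕂 := ℝ) Ft t
    let L : Matrix (Fin n) (Fin n) ℝ →ₗ[ℝ] (Fin n → ℝ) :=
      { toFun := fun M => M.mulVec c
        map_add' := fun M₁ M₂ => Matrix.add_mulVec M₁ M₂ c
        map_smul' := fun r M => Matrix.smul_mulVec r M c }
    have hcomp := (⟨L, L.continuous_of_finiteDimensional⟩ :
      Matrix (Fin n) (Fin n) ℝ →L[ℝ] (Fin n → ℝ)).hasFDerivAt
      (x := exp (t • Ft)) |>.comp_hasDerivAt t hD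
    have : HasDerivAt (fun u : ℝ => (exp (u • Ft)).mulVec c)
        ((Ft * exp (t • Ft)).mulVec c) t := by
      exact hcomp
    rw [hy]
    have hswap : (Ft * exp (t • Ft)).mulVec c = Ft.mulVec ((exp (t • Ft)).mulVec c) :=
      (Matrix.mulVec_mulVec c Ft (exp (t • Ft))).symm
    rw [← hswap]
    exact this
  have heq0 : e 0 = y 0 := by
    rw [hy]
    simp [hc]
  have hyeq : ∀ T : ℝ, 0 ≤ T → e T = y T := by
    intro T hT
    let LF := (Matrix.mulVecLin Ft).toContinuousLinearMap
    have hlip : ∀ _s : ℝ, LipschitzWith ‖LF‖₊ (fun x : Fin n → ℝ => Ft.mulVec x) :=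
      fun _ => LF.lipschitz
    exact ODE_solution_unique (v := fun _ x => Ft.mulVec x) hlip
      (fun s _ => (hder s).continuousAt.continuousWithinAt)
      (fun s _ => (hder s).hasDerivWithinAt)
      (fun s _ => (hyder s).continuousAt.continuousWithinAt)
      (fun s _ => (hyder s).hasDerivWithinAt)
      heq0 (Set.mem_Icc.mpr ⟨hT, le_refl T⟩)
  set A := Ft.map Complex.ofReal with hA
  set w : Fin n → ℂ := fun i => ((c i : ℝ) : ℂ) with hwdef
  have hyc : Tendsto (fun t : ℝ => (exp ((t:ℂ) • A)).mulVec w) atTop (nhds 0) :=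
    exp_mulVec_tendsto_zero A hspec w
  have h2 : ∀ (t : ℝ) (i : Fin n), (exp ((t:ℂ) • A)).mulVec w i = ((y t i : ℝ) : ℂ) := by
    intro t i
    rw [hy, hA, ← exp_map_ofReal, hwdef]
    exact mulVec_map_ofReal (exp (t • Ft)) c i
  have hytend : Tendsto y atTop (nhds 0) := by
    rw [tendsto_pi_nhds]
    intro i
    have h1 : Tendsto (fun t : ℝ => (exp ((t:ℂ) • A)).mulVec w i) atTop (nhds 0) := by
      have := (tendsto_pi_nhds.mp hyc) i
      simpa using this
    have h3 := (Complex.continuous_re.tendsto 0).comp h1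
    have h4 : (fun t : ℝ => ((exp ((t:ℂ) • A)).mulVec w i).re) = fun t => y t i := by
      funext t
      rw [h2 t i, Complex.ofReal_re]
    rw [← h4]
    simpa [Function.comp_def] using h3
  refine hytend.congr' ?_
  filter_upwards [eventually_ge_atTop (0:ℝ)] with t ht
  exact (hyeq t ht).symm

/-- exact unknown-input tracking: with
`H̃ = Ũ((C̃Ũ)ᵀC̃Ũ)⁻¹(C̃Ũ)ᵀ` (so `(I - H̃C̃)Ũ = 0`), `F̃ = Ã - H̃C̃Ã`,
`K̃ = F̃H̃`, the estimation error `e = z - ẑ` of the observer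
`ζ̇ = F̃ζ + K̃C̃z`, `ẑ = ζ + H̃C̃z` for the plant `ż = Ãz + Ũv` obeys
`ė = F̃e` independently of the unknown input `v`; if moreover `F̃` is Hurwitz
then `e(t) → 0` as `t → ∞`. -/
theorem stmt_14 {n q p : ℕ}
    (At : Matrix (Fin n) (Fin n) ℝ) (Ut : Matrix (Fin n) (Fin q) ℝ)
    (Ct : Matrix (Fin p) (Fin n) ℝ)
    (hrank : (Ct * Ut).rank = q)
    (Ht : Matrix (Fin n) (Fin p) ℝ)
    (hHt : Ht = Ut * ((Ct * Ut)ᵀ * (Ct * Ut))⁻¹ * (Ct * Ut)ᵀ)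
    (Ft : Matrix (Fin n) (Fin n) ℝ) (hFt : Ft = At - Ht * Ct * At)
    (Kt : Matrix (Fin n) (Fin p) ℝ) (hKt : Kt = Ft * Ht)
    (v : ℝ → Fin q → ℝ) (hv : Continuous v)
    (z ζ : ℝ → Fin n → ℝ)
    (hz : ∀ t, HasDerivAt z (At.mulVec (z t) + Ut.mulVec (v t)) t)
    (hζ : ∀ t, HasDerivAt ζ (Ft.mulVec (ζ t) + Kt.mulVec (Ct.mulVec (z t))) t)
    (zhat e : ℝ → Fin n → ℝ)
    (hzhat : ∀ t, zhat t = ζ t + Ht.mulVec (Ct.mulVec (z t)))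
    (he : ∀ t, e t = z t - zhat t) :
    (∀ t, HasDerivAt e (Ft.mulVec (e t)) t) ∧
    ((∀ μ ∈ spectrum ℂ (Ft.map Complex.ofReal), μ.re < 0) →
      Filter.Tendsto e Filter.atTop (nhds 0)) := by
  classical
  have hder : ∀ t, HasDerivAt e (Ft.mulVec (e t)) t := by
    classical
    -- invertibility of (CU)ᵀCU
    have hB : IsUnit ((Ct * Ut)ᵀ * (Ct * Ut)) := by
      have h1 : ((Ct * Ut)ᵀ * (Ct * Ut)).rank = q := by
        rw [Matrix.rank_transpose_mul_self]; exact hrank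
      rw [← Matrix.mulVec_surjective_iff_isUnit]
      have h2 : LinearMap.range (Matrix.mulVecLin ((Ct * Ut)ᵀ * (Ct * Ut))) = ⊤ :=
        Submodule.eq_top_of_finrank_eq (by
          rw [Matrix.rank] at h1
          simp [h1])
      intro y
      obtain ⟨x, hx⟩ := LinearMap.range_eq_top.mp h2 y
      exact ⟨x, by rwa [Matrix.mulVecLin_apply] at hx⟩
    have hB' : ((Ct * Ut)ᵀ * (Ct * Ut))⁻¹ * ((Ct * Ut)ᵀ * (Ct * Ut)) = 1 :=
      Matrix.nonsing_inv_mul _ ((Matrix.isUnit_iff_isUnit_det _).mp hB)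
    have hHCU : Ht * (Ct * Ut) = Ut := by
      rw [hHt, Matrix.mul_assoc (Ut * ((Ct * Ut)ᵀ * (Ct * Ut))⁻¹) ((Ct * Ut)ᵀ) (Ct * Ut),
        Matrix.mul_assoc Ut (((Ct * Ut)ᵀ * (Ct * Ut))⁻¹) _, hB', Matrix.mul_one]
    have hHCU2 : Ht * Ct * Ut = Ut := by rw [Matrix.mul_assoc, hHCU]
    intro t
    have hE : e = fun s => z s - ζ s - (Ht * Ct).mulVec (z s) := by
      funext s
      rw [he, hzhat, Matrix.mulVec_mulVec, sub_add_eq_sub_sub]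
    have hclm : ∀ (M : Matrix (Fin n) (Fin n) ℝ) (f : ℝ → Fin n → ℝ) (d : Fin n → ℝ) (s : ℝ),
        HasDerivAt f d s → HasDerivAt (fun u => M.mulVec (f u)) (M.mulVec d) s := by
      intro M f d s hf
      have := ((Matrix.mulVecLin M).toContinuousLinearMap).hasFDerivAt
        (x := f s) |>.comp_hasDerivAt s hf
      exact this
    have h3 := hclm (Ht * Ct) z (At.mulVec (z t) + Ut.mulVec (v t)) t (hz t)
    have hd := ((hz t).sub (hζ t)).sub h3
    have halg : Ft.mulVec (z t - ζ t - (Ht * Ct).mulVec (z t))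
        = At.mulVec (z t) + Ut.mulVec (v t) - (Ft.mulVec (ζ t) + Kt.mulVec (Ct.mulVec (z t)))
          - (Ht * Ct).mulVec (At.mulVec (z t) + Ut.mulVec (v t)) := by
      simp only [hKt, hFt, Matrix.mulVec_sub, Matrix.sub_mulVec, Matrix.mulVec_add,
        Matrix.add_mulVec, Matrix.mulVec_mulVec, Matrix.sub_mul, Matrix.mul_sub, Matrix.mul_assoc]
      rw [show Ht * (Ct * Ut) = Ut from hHCU]
      abel
    rw [hE]
    beta_reduce
    rw [halg]
    exact hd
  exact ⟨hder, fun hspec => part2_aux Ft e hder hspec⟩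
end
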